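/- Let γ ∈ [−2,−1) and b_j(z) = −2|z|^γ z_j. Then for any θ' > 3/2 there exists C > 0 such that for all v ∈ ℝ³ and all j: |(b_j * f)(v)| ≤ C ⟨v⟩^{γ+1} ‖⟨·⟩^{θ'} f‖_{L²(ℝ³)}, whenever the right-hand side is finite. -/

import Mathlib

open MeasureTheory Real

noncomputable section

abbrev R3 := EuclideanSpace ℝ (Fin 3)

/-- The Japanese bracket ⟨v⟩ = (1 + |v|²)^{1/2}. -/
def jb (v : R3) : ℝ := Real.sqrt (1 + ‖v‖ ^ 2)

open Set Metric Filter
open scoped ENNReal NNReal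

lemma jb_pos (v : R3) : 0 < jb v := Real.sqrt_pos.2 (by positivity)

lemma one_le_jb (v : R3) : 1 ≤ jb v := by
  rw [show (1:ℝ) = Real.sqrt 1 by simp]
  exact Real.sqrt_le_sqrt (by nlinarith [sq_nonneg ‖v‖])

lemma jb_le (v : R3) : jb v ≤ 1 + ‖v‖ := by
  rw [show (1:ℝ) + ‖v‖ = Real.sqrt ((1+‖v‖)^2) from (Real.sqrt_sq (by positivity)).symm]
  exact Real.sqrt_le_sqrt (by nlinarith [norm_nonneg v])

lemma le_sqrt_two_mul_jb (v : R3) : 1 + ‖v‖ ≤ Real.sqrt 2 * jb v := by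
  rw [jb, ← Real.sqrt_mul (by norm_num)]
  rw [show (1:ℝ) + ‖v‖ = Real.sqrt ((1+‖v‖)^2) from (Real.sqrt_sq (by positivity)).symm]
  exact Real.sqrt_le_sqrt (by nlinarith [sq_nonneg (1 - ‖v‖)])

lemma measurable_jb : Measurable jb := by
  have : Continuous jb := by
    unfold jb; fun_prop
  exact this.measurable

lemma jb_rpow (v : R3) (t : ℝ) : jb v ^ t = (1 + ‖v‖ ^ 2) ^ (t / 2) := by
  rw [jb, Real.sqrt_eq_rpow, ← Real.rpow_mul (by positivity)]
  ring_nf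

lemma integrable_jb_rpow {β : ℝ} (hβ : 3 < β) : Integrable (fun w : R3 => jb w ^ (-β)) := by
  have h := integrable_rpow_neg_one_add_norm_sq (E := R3) (μ := volume) (r := β) (by simpa using hβ)
  refine h.congr (Filter.Eventually.of_forall fun w => ?_)
  simp only []
  rw [jb_rpow, neg_div]

lemma measurable_norm_rpow (c : ℝ) : Measurable (fun u : R3 => ‖u‖ ^ c) := by fun_prop

lemma integrableOn_norm_rpow_ball {c : ℝ} (hc1 : -2 ≤ c) (hc2 : c < 0) :
    IntegrableOn (fun u : R3 => ‖u‖ ^ c) (ball 0 1) := by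
  have hmble : Measurable (fun u : R3 => ‖u‖ ^ c) := measurable_norm_rpow c
  constructor
  · exact hmble.aestronglyMeasurable
  · rw [hasFiniteIntegral_iff_ofReal (Filter.Eventually.of_forall fun u => by positivity)]
    set μ' := volume.restrict (ball (0:R3) 1) with hμ'
    rw [lintegral_eq_lintegral_meas_le μ'
      (Filter.Eventually.of_forall fun u => by positivity) hmble.aemeasurable]
    have hball : volume (ball (0:R3) 1) < ⊤ := measure_ball_lt_top
    have key : ∀ t : ℝ, 1 < t →
        μ' {a : R3 | t ≤ ‖a‖ ^ c} ≤ ENNReal.ofReal (t ^ (3 * c⁻¹)) * volume (ball (0:R3) 1) := by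
      intro t ht
      have ht0 : 0 < t := lt_trans one_pos ht
      have hsub : {a : R3 | t ≤ ‖a‖ ^ c} ⊆ closedBall 0 (t ^ c⁻¹) := by
        intro a ha
        simp only [mem_setOf_eq] at ha
        rcases eq_or_ne a 0 with rfl | h0
        · rw [norm_zero, Real.zero_rpow hc2.ne] at ha; linarith
        · have hna : 0 < ‖a‖ := norm_pos_iff.2 h0
          rw [mem_closedBall_zero_iff]
          have h2 := Real.rpow_le_rpow_of_nonpos ht0 ha (inv_nonpos.2 hc2.le)
          rwa [Real.rpow_rpow_inv (norm_nonneg a) hc2.ne] at h2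
      calc μ' {a : R3 | t ≤ ‖a‖ ^ c} ≤ volume (closedBall (0:R3) (t ^ c⁻¹)) := by
            exact le_trans (Measure.restrict_le_self _) (measure_mono hsub)
        _ = ENNReal.ofReal ((t ^ c⁻¹) ^ (3:ℕ)) * volume (ball (0:R3) 1) := by
            rw [Measure.addHaar_closedBall volume 0 (Real.rpow_nonneg ht0.le _)]
            norm_num
        _ = ENNReal.ofReal (t ^ (3 * c⁻¹)) * volume (ball (0:R3) 1) := by
            rw [← Real.rpow_natCast (t ^ c⁻¹) 3, ← Real.rpow_mul ht0.le]
            norm_num [mul_comm]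
    calc ∫⁻ t in Ioi (0:ℝ), μ' {a : R3 | t ≤ ‖a‖ ^ c}
        ≤ ∫⁻ t in Ioc 0 1 ∪ Ioi 1, μ' {a : R3 | t ≤ ‖a‖ ^ c} :=
          lintegral_mono_set Ioi_subset_Ioc_union_Ioi
      _ ≤ (∫⁻ t in Ioc (0:ℝ) 1, μ' {a : R3 | t ≤ ‖a‖ ^ c})
            + ∫⁻ t in Ioi (1:ℝ), μ' {a : R3 | t ≤ ‖a‖ ^ c} := lintegral_union_le _ _ _
      _ < ⊤ := by
          refine ENNReal.add_lt_top.2 ⟨?_, ?_⟩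
          · calc (∫⁻ t in Ioc (0:ℝ) 1, μ' {a : R3 | t ≤ ‖a‖ ^ c})
                ≤ ∫⁻ _ in Ioc (0:ℝ) 1, volume (ball (0:R3) 1) := by
                  refine lintegral_mono fun t => ?_
                  exact le_trans (measure_mono (subset_univ _))
                    (le_of_eq (Measure.restrict_apply_univ _))
              _ < ⊤ := by
                  rw [setLIntegral_const]
                  exact ENNReal.mul_lt_top hball (by simp [Real.volume_Ioc])
          · have hfin : ∫⁻ t in Ioi (1:ℝ), ENNReal.ofReal (t ^ (3 * c⁻¹)) < ⊤ := by
              have hint : IntegrableOn (fun t : ℝ => t ^ (3 * c⁻¹)) (Ioi 1) := by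
                refine integrableOn_Ioi_rpow_of_lt ?_ one_pos
                have hu : c⁻¹ < 0 := inv_lt_zero.2 hc2
                have hcu : c * c⁻¹ = 1 := mul_inv_cancel₀ hc2.ne
                have h3 : (c+2) * c⁻¹ ≤ 0 :=
                  mul_nonpos_of_nonneg_of_nonpos (by linarith) hu.le
                nlinarith
              have := hint.2
              rw [hasFiniteIntegral_iff_ofReal ?hnn] at this
              · exact this
              case hnn =>
                filter_upwards [ae_restrict_mem measurableSet_Ioi] with t ht
                exact Real.rpow_nonneg (le_of_lt (lt_trans one_pos ht)) _
            calc (∫⁻ t in Ioi (1:ℝ), μ' {a : R3 | t ≤ ‖a‖ ^ c})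
                ≤ ∫⁻ t in Ioi (1:ℝ), ENNReal.ofReal (t ^ (3 * c⁻¹)) * volume (ball (0:R3) 1) := by
                  refine setLIntegral_mono' measurableSet_Ioi fun t ht => key t ht
              _ = (∫⁻ t in Ioi (1:ℝ), ENNReal.ofReal (t ^ (3 * c⁻¹))) * volume (ball (0:R3) 1) := by
                  rw [lintegral_mul_const' _ _ hball.ne]
              _ < ⊤ := ENNReal.mul_lt_top hfin hball
lemma finrank_R3 : Module.finrank ℝ R3 = 3 := by simp

lemma ball_scaling {c : ℝ} (hc1 : -2 ≤ c) (hc2 : c < 0) {R : ℝ} (hR : 0 < R) :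
    IntegrableOn (fun u : R3 => ‖u‖ ^ c) (ball 0 R) ∧
    ∫ u in ball (0:R3) R, ‖u‖ ^ c = R ^ (3 + c) * ∫ u in ball (0:R3) 1, ‖u‖ ^ c := by
  set F : R3 → ℝ := (ball (0:R3) R).indicator (fun u => ‖u‖ ^ c) with hF
  have claim : ∀ x : R3, F (R • x) =
      R ^ c * (ball (0:R3) 1).indicator (fun u => ‖u‖ ^ c) x := by
    intro x
    have hnorm : ‖R • x‖ = R * ‖x‖ := by
      rw [norm_smul, Real.norm_eq_abs, abs_of_pos hR]
    by_cases hx : x ∈ ball (0:R3) 1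
    · have hx' : R • x ∈ ball (0:R3) R := by
        rw [mem_ball_zero_iff] at hx ⊢
        rw [hnorm]; nlinarith
      rw [hF, indicator_of_mem hx', indicator_of_mem hx, hnorm,
        Real.mul_rpow hR.le (norm_nonneg x)]
    · have hx' : R • x ∉ ball (0:R3) R := by
        rw [mem_ball_zero_iff] at hx ⊢
        rw [hnorm]; intro h; exact hx (by nlinarith)
      rw [hF, indicator_of_notMem hx', indicator_of_notMem hx, mul_zero]
  have hint1 : Integrable (fun x => F (R • x)) := by
    simp only [claim]
    exact ((integrable_indicator_iff measurableSet_ball).2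
      (integrableOn_norm_rpow_ball hc1 hc2)).const_mul _
  have hintF : Integrable F := (integrable_comp_smul_iff volume F hR.ne').1 hint1
  constructor
  · exact (integrable_indicator_iff measurableSet_ball).1 hintF
  · have hval := Measure.integral_comp_smul volume F R
    rw [finrank_R3] at hval
    have hval2 : ∫ x, F (R • x) = R ^ c * ∫ u in ball (0:R3) 1, ‖u‖ ^ c := by
      simp only [claim]
      rw [integral_const_mul, integral_indicator measurableSet_ball]
    rw [hval2] at hval
    have hR3 : |((R ^ (3:ℕ))⁻¹)| = (R^(3:ℕ))⁻¹ := abs_of_pos (by positivity)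
    rw [hR3, smul_eq_mul] at hval
    have hne : (R:ℝ) ^ (3:ℕ) ≠ 0 := by positivity
    have this1 : ∫ x, F x = R ^ (3:ℕ) * (R ^ c * ∫ u in ball (0:R3) 1, ‖u‖ ^ c) := by
      rw [hval]; field_simp
    rw [← integral_indicator measurableSet_ball, ← hF, this1, ← mul_assoc,
      ← Real.rpow_natCast R 3, ← Real.rpow_add hR]
    norm_num [mul_assoc]

lemma ball_translate (v : R3) (c R : ℝ) :
    (IntegrableOn (fun w : R3 => ‖v - w‖ ^ c) (ball v R) ↔
      IntegrableOn (fun u : R3 => ‖u‖ ^ c) (ball 0 R)) ∧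
    ∫ w in ball v R, ‖v - w‖ ^ c = ∫ u in ball (0:R3) R, ‖u‖ ^ c := by
  have hmp : MeasurePreserving (fun w : R3 => v - w) volume volume :=
    Measure.measurePreserving_sub_left volume v
  have hemb : MeasurableEmbedding (fun w : R3 => v - w) :=
    (MeasurableEquiv.subLeft v).measurableEmbedding
  have hpre : (fun w : R3 => v - w) ⁻¹' (ball 0 R) = ball v R := by
    ext w
    simp only [mem_preimage, mem_ball, dist_eq_norm, dist_comm, sub_zero]
    rw [norm_sub_rev]
  have h2 := (hmp.restrict_preimage_emb hemb (ball 0 R)).integrable_comp_emb hemb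
    (g := fun u : R3 => ‖u‖ ^ c)
  have h3 := hmp.setIntegral_preimage_emb hemb (fun u : R3 => ‖u‖ ^ c) (ball 0 R)
  rw [hpre] at h2 h3
  simp only [Function.comp_def] at h2 h3
  exact ⟨h2, h3⟩
lemma div_rpow_pos {x y : ℝ} (hx : 0 < x) (hy : 0 < y) (z : ℝ) :
    (x / y) ^ z = x ^ z * y ^ (-z) := by
  rw [Real.div_rpow hx.le hy.le, Real.rpow_neg hy.le, div_eq_mul_inv]

lemma key {c β : ℝ} (hc1 : -2 ≤ c) (hc2 : c < 0) (hβ : 3 < β) :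
    ∃ K : ℝ, 0 < K ∧ ∀ v : R3,
      Integrable (fun w : R3 => ‖v - w‖ ^ c * jb w ^ (-β)) ∧
      ∫ w : R3, ‖v - w‖ ^ c * jb w ^ (-β) ≤ K * jb v ^ c := by
  set c₁ : ℝ := ∫ u in ball (0:R3) 1, ‖u‖ ^ c with hc₁
  set c₂ : ℝ := ∫ w : R3, jb w ^ (-β) with hc₂
  have hc₁0 : 0 ≤ c₁ := integral_nonneg fun u => Real.rpow_nonneg (norm_nonneg u) c
  have hc₂0 : 0 ≤ c₂ := integral_nonneg fun w => Real.rpow_nonneg (jb_pos w).le _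
  set K₁ : ℝ := (2 * Real.sqrt 2) ^ β * 2 ^ (-(3+c)) * c₁ with hK₁
  set K₂ : ℝ := 2 ^ (-c) * c₂ with hK₂
  have hK₁0 : 0 ≤ K₁ := by positivity
  have hK₂0 : 0 ≤ K₂ := by positivity
  refine ⟨K₁ + K₂ + 1, by positivity, fun v => ?_⟩
  set φ : R3 → ℝ := fun w => ‖v - w‖ ^ c * jb w ^ (-β) with hφ
  have hφmble : Measurable φ := by
    apply Measurable.mul
    · exact (measurable_norm_rpow c).comp (measurable_const.sub measurable_id)
    · have h : Measurable (fun x : ℝ => x ^ (-β)) := by fun_prop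
      exact h.comp measurable_jb
  have hφnn : ∀ w, 0 ≤ φ w := fun w => by
    apply mul_nonneg (Real.rpow_nonneg (norm_nonneg _) _) (Real.rpow_nonneg (jb_pos _).le _)
  set R : ℝ := jb v / 2 with hRdef
  have hR : 0 < R := by have := jb_pos v; positivity
  set A : Set R3 := ball v R with hA
  -- lower bound for jb w on A
  have hjbw : ∀ w ∈ A, jb v / (2 * Real.sqrt 2) ≤ jb w := by
    intro w hw
    rw [hA, mem_ball, dist_comm, dist_eq_norm] at hw
    have h1 : ‖v‖ - ‖w‖ ≤ ‖v - w‖ := norm_sub_norm_le v w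
    have h2 : jb v ≤ 1 + ‖v‖ := jb_le v
    have h3 : 1 + ‖w‖ ≤ Real.sqrt 2 * jb w := le_sqrt_two_mul_jb w
    have h4 : jb v / 2 ≤ 1 + ‖w‖ := by
      simp only [hRdef] at hw; linarith
    rw [div_le_iff₀ (by positivity)]
    have hs2 : (1:ℝ) ≤ Real.sqrt 2 := by
      rw [show (1:ℝ) = Real.sqrt 1 by simp]
      exact Real.sqrt_le_sqrt (by norm_num)
    nlinarith [Real.sqrt_nonneg 2, jb_pos w]
  set cA : ℝ := (jb v / (2 * Real.sqrt 2)) ^ (-β) with hcA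
  have hcApos : 0 < cA := Real.rpow_pos_of_pos (by have := jb_pos v; positivity) _
  -- majorant on A
  have hmajA : IntegrableOn (fun w => cA * ‖v - w‖ ^ c) A := by
    exact (((ball_translate v c R).1).mpr (ball_scaling hc1 hc2 hR).1).const_mul cA
  have hboundA : ∀ w ∈ A, φ w ≤ cA * ‖v - w‖ ^ c := by
    intro w hw
    have : jb w ^ (-β) ≤ cA := by
      rw [hcA]
      exact Real.rpow_le_rpow_of_nonpos (by have := jb_pos v; positivity) (hjbw w hw)
        (by linarith)
    calc φ w = ‖v - w‖ ^ c * jb w ^ (-β) := rfl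
      _ ≤ ‖v - w‖ ^ c * cA :=
          mul_le_mul_of_nonneg_left this (Real.rpow_nonneg (norm_nonneg _) _)
      _ = cA * ‖v - w‖ ^ c := mul_comm _ _
  have hφA : IntegrableOn φ A := by
    refine Integrable.mono' hmajA (hφmble.aestronglyMeasurable.restrict) ?_
    refine (ae_restrict_iff' measurableSet_ball).2 (ae_of_all _ fun w hw => ?_)
    rw [Real.norm_eq_abs, abs_of_nonneg (hφnn w)]
    exact hboundA w hw
  have hintA : ∫ w in A, φ w ≤ K₁ * jb v ^ c := by
    calc ∫ w in A, φ w ≤ ∫ w in A, cA * ‖v - w‖ ^ c :=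
          setIntegral_mono_on hφA hmajA measurableSet_ball hboundA
      _ = cA * ∫ w in A, ‖v - w‖ ^ c := integral_const_mul _ _
      _ = cA * (R ^ (3 + c) * c₁) := by rw [hA, (ball_translate v c R).2, (ball_scaling hc1 hc2 hR).2]
      _ = ((2 * Real.sqrt 2) ^ β * 2 ^ (-(3+c)) * c₁) * jb v ^ (-β + (3+c)) := by
          rw [hcA, hRdef, div_rpow_pos (jb_pos v) (by positivity),
            div_rpow_pos (jb_pos v) (by norm_num), neg_neg,
            Real.rpow_add (jb_pos v) (-β) (3+c)]
          ring
      _ ≤ ((2 * Real.sqrt 2) ^ β * 2 ^ (-(3+c)) * c₁) * jb v ^ c := by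
          refine mul_le_mul_of_nonneg_left ?_ (by positivity)
          exact Real.rpow_le_rpow_of_exponent_le (one_le_jb v) (by linarith)
      _ = K₁ * jb v ^ c := by rw [hK₁]
  -- complement
  have hmajB : Integrable (fun w : R3 => R ^ c * jb w ^ (-β)) :=
    (integrable_jb_rpow hβ).const_mul _
  have hboundB : ∀ w ∈ Aᶜ, φ w ≤ R ^ c * jb w ^ (-β) := by
    intro w hw
    have hge : R ≤ ‖v - w‖ := by
      rw [hA, mem_compl_iff, mem_ball, dist_comm, dist_eq_norm, not_lt] at hw
      exact hw
    have : ‖v - w‖ ^ c ≤ R ^ c := Real.rpow_le_rpow_of_nonpos hR hge hc2.le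
    exact mul_le_mul_of_nonneg_right this (Real.rpow_nonneg (jb_pos _).le _)
  have hφB : IntegrableOn φ Aᶜ := by
    refine Integrable.mono' hmajB.integrableOn (hφmble.aestronglyMeasurable.restrict) ?_
    refine (ae_restrict_iff' measurableSet_ball.compl).2 (ae_of_all _ fun w hw => ?_)
    rw [Real.norm_eq_abs, abs_of_nonneg (hφnn w)]
    exact hboundB w hw
  have hintB : ∫ w in Aᶜ, φ w ≤ K₂ * jb v ^ c := by
    calc ∫ w in Aᶜ, φ w ≤ ∫ w in Aᶜ, R ^ c * jb w ^ (-β) :=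
          setIntegral_mono_on hφB hmajB.integrableOn measurableSet_ball.compl hboundB
      _ ≤ ∫ w : R3, R ^ c * jb w ^ (-β) := by
          refine setIntegral_le_integral hmajB (ae_of_all _ fun w => ?_)
          exact mul_nonneg (Real.rpow_nonneg hR.le _) (Real.rpow_nonneg (jb_pos _).le _)
      _ = R ^ c * c₂ := integral_const_mul _ _
      _ = (2:ℝ) ^ (-c) * c₂ * jb v ^ c := by
          rw [hRdef, div_rpow_pos (jb_pos v) (by norm_num)]
          ring
      _ = K₂ * jb v ^ c := by rw [hK₂]
  have hφint : Integrable φ := by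
    have hu := hφA.union hφB
    rwa [union_compl_self, integrableOn_univ] at hu
  refine ⟨hφint, ?_⟩
  have hsplit : (∫ w in A, φ w) + ∫ w in Aᶜ, φ w = ∫ w, φ w :=
    integral_add_compl measurableSet_ball hφint
  have : ∫ w, φ w ≤ (K₁ + K₂) * jb v ^ c := by
    rw [← hsplit, add_mul]; exact add_le_add hintA hintB
  refine le_trans this ?_
  have hjc : (0:ℝ) < jb v ^ c := Real.rpow_pos_of_pos (jb_pos v) c
  nlinarith
lemma rpow_sq {x : ℝ} (hx : 0 ≤ x) (a : ℝ) : (x ^ a) ^ (2:ℕ) = x ^ (2*a) := by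
  rw [← Real.rpow_natCast (x ^ a) 2, ← Real.rpow_mul hx]
  norm_num [mul_comm]

lemma coord_le_norm (z : R3) (j : Fin 3) : |z j| ≤ ‖z‖ := by
  rw [EuclideanSpace.norm_eq, ← Real.sqrt_sq_eq_abs]
  refine Real.sqrt_le_sqrt ?_
  have h := Finset.single_le_sum (f := fun i => ‖z i‖ ^ 2)
    (fun i _ => sq_nonneg _) (Finset.mem_univ j)
  simpa [Real.norm_eq_abs, sq_abs] using h

theorem stmt9 (γ θ' : ℝ) (hγ1 : -2 ≤ γ) (hγ2 : γ < -1) (hθ : 3/2 < θ') :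
    ∃ C : ℝ, 0 < C ∧ ∀ f : R3 → ℝ,
      Integrable (fun w : R3 => (jb w ^ θ' * f w) ^ 2) →
      ∀ (v : R3) (j : Fin 3),
        |∫ w : R3, (-2 * ‖v - w‖ ^ γ * (v - w) j) * f w|
          ≤ C * jb v ^ (γ + 1) * (∫ w : R3, (jb w ^ θ' * f w) ^ 2) ^ ((1:ℝ)/2) := by
  obtain ⟨K, hK, hkey⟩ := key (c := 2*(γ+1)) (β := 2*θ')
    (by linarith) (by linarith) (by linarith)
  refine ⟨(4*K) ^ ((1:ℝ)/2), Real.rpow_pos_of_pos (by linarith) _, fun f hf v j => ?_⟩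
  set C : ℝ := (4*K) ^ ((1:ℝ)/2) with hC
  have hCpos : 0 < C := Real.rpow_pos_of_pos (by linarith) _
  have hY0 : 0 ≤ ∫ w : R3, (jb w ^ θ' * f w) ^ 2 := integral_nonneg fun w => sq_nonneg _
  have hjba : 0 < jb v ^ (γ+1) := Real.rpow_pos_of_pos (jb_pos v) _
  set g : R3 → ℝ := fun w => (-2 * ‖v - w‖ ^ γ * (v - w) j) * f w with hg
  by_cases hgint : Integrable g
  swap
  · rw [integral_undef hgint, abs_zero]
    exact mul_nonneg (mul_nonneg hCpos.le hjba.le) (Real.rpow_nonneg hY0 _)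
  -- definitions
  set h₁ : R3 → ℝ := fun w => 2 * ‖v - w‖ ^ (γ+1) * jb w ^ (-θ') with hh₁
  set h₂ : R3 → ℝ := fun w => Real.sqrt ((jb w ^ θ' * f w) ^ 2) with hh₂
  have hh₁nn : ∀ w, 0 ≤ h₁ w := fun w => by
    have := Real.rpow_nonneg (norm_nonneg (v - w)) (γ+1)
    have := Real.rpow_nonneg (jb_pos w).le (-θ')
    positivity
  have hh₂nn : ∀ w, 0 ≤ h₂ w := fun w => Real.sqrt_nonneg _
  have hh₂sq : ∀ w, h₂ w ^ 2 = (jb w ^ θ' * f w) ^ 2 := fun w => Real.sq_sqrt (sq_nonneg _)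
  have hh₂eq : ∀ w, h₂ w = jb w ^ θ' * |f w| := fun w => by
    rw [hh₂]
    simp only []
    rw [Real.sqrt_sq_eq_abs, abs_mul, abs_of_pos (Real.rpow_pos_of_pos (jb_pos w) _)]
  -- pointwise bound
  have hptwise : ∀ w, |g w| ≤ h₁ w * h₂ w := by
    intro w
    have hzc : ‖v - w‖ ^ γ * |(v - w) j| ≤ ‖v - w‖ ^ (γ+1) := by
      rcases eq_or_ne (v - w) 0 with h0 | h0
      · rw [h0]
        simp [Real.zero_rpow (by linarith : γ ≠ 0), Real.zero_rpow (by linarith : γ+1 ≠ 0)]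
      · rw [Real.rpow_add_one (norm_ne_zero_iff.2 h0)]
        exact mul_le_mul_of_nonneg_left (coord_le_norm _ j)
          (Real.rpow_nonneg (norm_nonneg _) _)
    have hinv : jb w ^ (-θ') * jb w ^ θ' = 1 := by
      rw [Real.rpow_neg (jb_pos w).le]
      exact inv_mul_cancel₀ (ne_of_gt (Real.rpow_pos_of_pos (jb_pos w) _))
    have h1 : |g w| = 2 * (‖v - w‖ ^ γ * |(v - w) j|) * |f w| := by
      rw [hg]
      simp only []
      rw [abs_mul, abs_mul, abs_mul,
        abs_of_nonneg (Real.rpow_nonneg (norm_nonneg (v - w)) γ),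
        show |(-2:ℝ)| = 2 by norm_num]
      ring
    rw [h1, hh₂eq w, hh₁]
    simp only []
    calc 2 * (‖v - w‖ ^ γ * |(v - w) j|) * |f w|
        ≤ 2 * ‖v - w‖ ^ (γ+1) * |f w| := by
          refine mul_le_mul_of_nonneg_right ?_ (abs_nonneg _)
          nlinarith [hzc]
      _ = 2 * ‖v - w‖ ^ (γ+1) * jb w ^ (-θ') * (jb w ^ θ' * |f w|) := by
          rw [show 2 * ‖v - w‖ ^ (γ+1) * jb w ^ (-θ') * (jb w ^ θ' * |f w|)
            = 2 * ‖v - w‖ ^ (γ+1) * (jb w ^ (-θ') * jb w ^ θ') * |f w| by ring, hinv]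
          ring
  -- measurability
  have hmh₁ : Measurable h₁ := by
    apply Measurable.mul
    · exact ((measurable_norm_rpow (γ+1)).comp
        (measurable_const.sub measurable_id)).const_mul 2
    · have h : Measurable (fun x : ℝ => x ^ (-θ')) := by fun_prop
      exact h.comp measurable_jb
  have hamh₂ : AEMeasurable h₂ := by
    have hsq : AEMeasurable (fun w : R3 => (jb w ^ θ' * f w) ^ 2) :=
      hf.aestronglyMeasurable.aemeasurable
    exact Real.continuous_sqrt.measurable.comp_aemeasurable hsq
  -- integrability and bound for h₁²
  have hφ := hkey v
  have hint1 : Integrable (fun w => h₁ w ^ 2) := by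
    refine (hφ.1.const_mul 4).congr ?_
    refine Filter.Eventually.of_forall fun w => ?_
    rw [hh₁]
    simp only []
    rw [mul_pow, mul_pow, rpow_sq (norm_nonneg _), rpow_sq (jb_pos w).le]
    rw [show (-(2*θ') : ℝ) = 2*(-θ') by ring]
    norm_num; ring
  have hval1 : ∫ w, h₁ w ^ 2 ≤ 4 * K * jb v ^ (2*(γ+1)) := by
    have heq : ∫ w, h₁ w ^ 2 = 4 * ∫ w, ‖v - w‖ ^ (2*(γ+1)) * jb w ^ (-(2*θ')) := by
      rw [← integral_const_mul]
      refine integral_congr_ae (Filter.Eventually.of_forall fun w => ?_)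
      rw [hh₁]
      simp only []
      rw [mul_pow, mul_pow, rpow_sq (norm_nonneg _), rpow_sq (jb_pos w).le]
      rw [show (-(2*θ') : ℝ) = 2*(-θ') by ring]
      norm_num; ring
    rw [heq]
    have := hφ.2
    nlinarith
  -- the lintegral chain
  have hconj : Real.HolderConjugate 2 2 := (Real.holderConjugate_iff (p := 2) (q := 2)).2 ⟨one_lt_two, by norm_num⟩
  set F : R3 → ℝ≥0∞ := fun w => ENNReal.ofReal (h₁ w) with hF
  set G : R3 → ℝ≥0∞ := fun w => ENNReal.ofReal (h₂ w) with hG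
  have hFmble : AEMeasurable F := (hmh₁.ennreal_ofReal).aemeasurable
  have hGmble : AEMeasurable G := hamh₂.ennreal_ofReal
  have holder := ENNReal.lintegral_mul_le_Lp_mul_Lq volume hconj hFmble hGmble
  have hFsq : ∫⁻ w, F w ^ (2:ℝ) = ENNReal.ofReal (∫ w, h₁ w ^ 2) := by
    rw [ofReal_integral_eq_lintegral_ofReal hint1
      (Filter.Eventually.of_forall fun w => sq_nonneg _)]
    refine lintegral_congr fun w => ?_
    rw [hF]
    simp only []
    rw [show ((2:ℝ)) = ((2:ℕ):ℝ) by norm_num, ENNReal.rpow_natCast,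
      ← ENNReal.ofReal_pow (hh₁nn w)]
  have hGsq : ∫⁻ w, G w ^ (2:ℝ) = ENNReal.ofReal (∫ w, (jb w ^ θ' * f w) ^ 2) := by
    rw [ofReal_integral_eq_lintegral_ofReal hf
      (Filter.Eventually.of_forall fun w => sq_nonneg _)]
    refine lintegral_congr fun w => ?_
    rw [hG]
    simp only []
    rw [show ((2:ℝ)) = ((2:ℕ):ℝ) by norm_num, ENNReal.rpow_natCast,
      ← ENNReal.ofReal_pow (hh₂nn w), hh₂sq w]
  have hT : ∫⁻ w, ENNReal.ofReal ‖g w‖ ≤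
      ENNReal.ofReal (4 * K * jb v ^ (2*(γ+1))) ^ ((1:ℝ)/2) *
      ENNReal.ofReal (∫ w, (jb w ^ θ' * f w) ^ 2) ^ ((1:ℝ)/2) := by
    calc ∫⁻ w, ENNReal.ofReal ‖g w‖ ≤ ∫⁻ w, (F * G) w := by
          refine lintegral_mono fun w => ?_
          simp only [Pi.mul_apply, hF, hG]
          rw [← ENNReal.ofReal_mul (hh₁nn w)]
          exact ENNReal.ofReal_le_ofReal (by rw [Real.norm_eq_abs]; exact hptwise w)
      _ ≤ (∫⁻ w, F w ^ (2:ℝ)) ^ ((1:ℝ)/2) * (∫⁻ w, G w ^ (2:ℝ)) ^ ((1:ℝ)/2) := holder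
      _ ≤ ENNReal.ofReal (4 * K * jb v ^ (2*(γ+1))) ^ ((1:ℝ)/2) *
          ENNReal.ofReal (∫ w, (jb w ^ θ' * f w) ^ 2) ^ ((1:ℝ)/2) := by
          rw [hFsq, hGsq]
          refine mul_le_mul' ?_ le_rfl
          exact ENNReal.rpow_le_rpow (ENNReal.ofReal_le_ofReal hval1) (by norm_num)
  -- convert back to real
  have habs : |∫ w, g w| ≤ (∫⁻ w, ENNReal.ofReal ‖g w‖).toReal := by
    rw [← Real.norm_eq_abs]
    refine le_trans (norm_integral_le_integral_norm g) ?_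
    rw [integral_eq_lintegral_of_nonneg_ae
      (Filter.Eventually.of_forall fun w => norm_nonneg _) hgint.norm.aestronglyMeasurable]
  have hfin : ENNReal.ofReal (4 * K * jb v ^ (2*(γ+1))) ^ ((1:ℝ)/2) *
      ENNReal.ofReal (∫ w, (jb w ^ θ' * f w) ^ 2) ^ ((1:ℝ)/2) ≠ ⊤ := by
    refine ENNReal.mul_ne_top ?_ ?_ <;>
      exact (ENNReal.rpow_lt_top_of_nonneg (by norm_num) ENNReal.ofReal_ne_top).ne
  have hrhs : ((ENNReal.ofReal (4 * K * jb v ^ (2*(γ+1)))) ^ ((1:ℝ)/2) *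
      (ENNReal.ofReal (∫ w, (jb w ^ θ' * f w) ^ 2)) ^ ((1:ℝ)/2)).toReal
      = C * jb v ^ (γ+1) * (∫ w : R3, (jb w ^ θ' * f w) ^ 2) ^ ((1:ℝ)/2) := by
    rw [ENNReal.toReal_mul, ← ENNReal.toReal_rpow, ← ENNReal.toReal_rpow,
      ENNReal.toReal_ofReal (mul_nonneg (by linarith) (Real.rpow_nonneg (jb_pos v).le _)), ENNReal.toReal_ofReal hY0]
    congr 1
    rw [Real.mul_rpow (by positivity) (Real.rpow_nonneg (jb_pos v).le _), hC]
    rw [← Real.rpow_mul (jb_pos v).le, show (2*(γ+1))*((1:ℝ)/2) = γ+1 by ring]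
  calc |∫ w, g w| ≤ (∫⁻ w, ENNReal.ofReal ‖g w‖).toReal := habs
    _ ≤ ((ENNReal.ofReal (4 * K * jb v ^ (2*(γ+1)))) ^ ((1:ℝ)/2) *
        (ENNReal.ofReal (∫ w, (jb w ^ θ' * f w) ^ 2)) ^ ((1:ℝ)/2)).toReal :=
        ENNReal.toReal_mono hfin hT
    _ = C * jb v ^ (γ+1) * (∫ w : R3, (jb w ^ θ' * f w) ^ 2) ^ ((1:ℝ)/2) := hrhs
end
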